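/- Suppose the linear functional ⟨·⟩ is reflection positive for reflections through edges and the two-point function G_L is torus symmetric. For i ∈ {1,…,d} define G^{e_i}_L(x) := ½ ( G_L(o, x) + G_L(o, (x·e_i)·e_i) ). Then for any z ∈ T_L and any integer q ≥ 1 such that z·e_i + q is odd and both z·e_i − q and z·e_i + q lie in the interval (0, L), one has G^{e_i}_L(z + q·e_i) − G^{e_i}_L(z) ≥ G^{e_i}_L(z) − G^{e_i}_L(z − q·e_i). -/
import Mathlib


namespace RPPaper

/-- The torus `T_L = (ℤ/Lℤ)^d`. -/
abbrev Torus (d L : ℕ) : Type := Fin d → ZMod L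

/-- The unit vector `e i`. -/
def unitVec {d L : ℕ} (i : Fin d) : Torus d L := fun k => if k = i then 1 else 0

/-- The point `a • e i` on the torus. -/
def axis {d L : ℕ} (i : Fin d) (a : ZMod L) : Torus d L := fun k => if k = i then a else 0

/-- The integer representative of `a : ZMod L` in the interval `(-L/2, L/2]`. -/
def coordRep (L : ℕ) [NeZero L] (a : ZMod L) : ℤ :=
  if (a.val : ℤ) ≤ (L : ℤ) / 2 then (a.val : ℤ) else (a.val : ℤ) - (L : ℤ)

/-- The reflection of the torus in the hyperplane `{z : z·e i = t/2}` (here `t = 2m`);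
it is a reflection through edges if `t` is odd, and through vertices if `t` is even. -/
def reflect {d L : ℕ} (i : Fin d) (t : ℕ) (x : Torus d L) : Torus d L :=
  Function.update x i ((t : ZMod L) - x i)

/-- The positive half `T_L^+` of the torus associated to the reflection in the hyperplane
`{z : z·e i = t/2}`. -/
def posHalf (d L : ℕ) [NeZero L] (i : Fin d) (t : ℕ) : Finset (Torus d L) :=
  if t % 2 = 1 then Finset.univ.filter (fun x => (x i - (((t + 1) / 2 : ℕ) : ZMod L)).val < L / 2)
  else Finset.univ.filter (fun x => (x i - ((t / 2 : ℕ) : ZMod L)).val ≤ L / 2)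

/-- The negative half `T_L^- = θ(T_L^+)`. -/
def negHalf (d L : ℕ) [NeZero L] (i : Fin d) (t : ℕ) : Finset (Torus d L) :=
  (posHalf d L i t).image (reflect i t)

/-- The state space `S = ∏_{x ∈ T_L} Σ_x` (all local state spaces equal to `Sig`). -/
abbrev MState (d L : ℕ) (Sig : Type*) : Type _ := Torus d L → Sig

/-- `A : S → ℝ` has domain `D` if it depends only on the local states in `D`. -/
def HasDomain {d L : ℕ} {Sig : Type*} (A : MState d L Sig → ℝ) (D : Set (Torus d L)) : Prop :=
  ∀ w₁ w₂ : MState d L Sig, (∀ x ∈ D, w₁ x = w₂ x) → A w₁ = A w₂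

/-- The action `θA (w) = A (θ w)`, where `(θ w) x = w (θ x)`, of the reflection on functions. -/
def reflectFun {d L : ℕ} {Sig : Type*} (i : Fin d) (t : ℕ) (A : MState d L Sig → ℝ) :
    MState d L Sig → ℝ := fun w => A (fun x => w (reflect i t x))

/-- `⟨·⟩` is reflection positive with respect to the reflection in the hyperplane
`{z : z·e i = t/2}`: for all `A, B ∈ A_L^+` (members of the algebra with domain `T_L^+`),
`⟨A·θB⟩ = ⟨B·θA⟩` and `⟨A·θA⟩ ≥ 0`. -/
def IsRP {d L : ℕ} {Sig : Type*} [NeZero L] (AL : Subalgebra ℝ (MState d L Sig → ℝ))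
    (phi : (MState d L Sig → ℝ) →ₗ[ℝ] ℝ) (i : Fin d) (t : ℕ) : Prop :=
  ∀ A B : MState d L Sig → ℝ, A ∈ AL → B ∈ AL →
    HasDomain A ↑(posHalf d L i t) → HasDomain B ↑(posHalf d L i t) →
    phi (A * reflectFun i t B) = phi (B * reflectFun i t A) ∧ 0 ≤ phi (A * reflectFun i t A)

/-- Reflection positivity for all reflections through edges. -/
def RPEdges {d L : ℕ} {Sig : Type*} [NeZero L] (AL : Subalgebra ℝ (MState d L Sig → ℝ))
    (phi : (MState d L Sig → ℝ) →ₗ[ℝ] ℝ) : Prop :=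
  ∀ (i : Fin d) (t : ℕ), t < 2 * L → t % 2 = 1 → IsRP AL phi i t

/-- Reflection positivity for all reflections through vertices. -/
def RPVertices {d L : ℕ} {Sig : Type*} [NeZero L] (AL : Subalgebra ℝ (MState d L Sig → ℝ))
    (phi : (MState d L Sig → ℝ) →ₗ[ℝ] ℝ) : Prop :=
  ∀ (i : Fin d) (t : ℕ), t < 2 * L → t % 2 = 0 → IsRP AL phi i t

/-- The single-site function `F^j_x`, obtained from a function `f : Sig → ℝ` of the local
state at the origin by the (path-independent) sequence of reflections sending `o` to `x`. -/
def site {d L : ℕ} {Sig : Type*} (f : Sig → ℝ) (x : Torus d L) : MState d L Sig → ℝ :=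
  fun w => f (w x)

/-- The two-point function `G_L(x,y) = ⟨F²_x F²_y ∏_{z ≠ x,y} F¹_z⟩`. -/
noncomputable def twoPoint {d L : ℕ} {Sig : Type*} [NeZero L]
    (phi : (MState d L Sig → ℝ) →ₗ[ℝ] ℝ) (f1 f2 : Sig → ℝ) (x y : Torus d L) : ℝ :=
  phi (fun w => f2 (w x) * f2 (w y) * ∏ z ∈ (Finset.univ.erase x).erase y, f1 (w z))

/-- Torus symmetry: `⟨∏_{x∈A}F¹_x ∏_{x∈B}F²_x⟩ = ⟨∏_{x∈A+z}F¹_x ∏_{x∈B+z}F²_x⟩`. -/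
def TorusSymmetric {d L : ℕ} {Sig : Type*} [NeZero L]
    (phi : (MState d L Sig → ℝ) →ₗ[ℝ] ℝ) (f1 f2 : Sig → ℝ) : Prop :=
  ∀ (A B : Finset (Torus d L)) (z : Torus d L),
    phi (fun w => (∏ x ∈ A, f1 (w x)) * ∏ x ∈ B, f2 (w x)) =
      phi (fun w => (∏ x ∈ A, f1 (w (x + z))) * ∏ x ∈ B, f2 (w (x + z)))


/-- The function `G^{e i}_L(x) := ½ (G_L(o,x) + G_L(o, (x·e i) e i))`. -/
noncomputable def axisAvg {d L : ℕ} {Sig : Type*} [NeZero L]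
    (phi : (MState d L Sig → ℝ) →ₗ[ℝ] ℝ) (f1 f2 : Sig → ℝ) (i : Fin d) (x : Torus d L) : ℝ :=
  (twoPoint phi f1 f2 0 x + twoPoint phi f1 f2 0 (axis i (x i))) / 2

section Aux


variable {d L : ℕ} [NeZero L] {Sig : Type*}

lemma reflect_apply_self (i : Fin d) (t : ℕ) (x : Torus d L) :
    reflect i t x i = (t : ZMod L) - x i := by
  simp [reflect]

lemma reflect_apply_ne (i : Fin d) (t : ℕ) (x : Torus d L) {k : Fin d} (hk : k ≠ i) :
    reflect i t x k = x k := by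
  simp [reflect, Function.update_of_ne hk]

lemma reflect_involutive (i : Fin d) (t : ℕ) :
    Function.Involutive (reflect (L := L) i t) := by
  intro x; funext k
  by_cases hk : k = i
  · subst hk; rw [reflect_apply_self, reflect_apply_self]; ring
  · rw [reflect_apply_ne _ _ _ hk, reflect_apply_ne _ _ _ hk]

lemma cast_t (hL1 : 1 ≤ L) : ((2 * L - 1 : ℕ) : ZMod L) = -1 := by
  have h : (2 * L - 1) + 1 = 2 * L := by omega
  have h2 := congrArg (Nat.cast : ℕ → ZMod L) h
  push_cast at h2
  rw [ZMod.natCast_self] at h2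
  linear_combination h2

lemma val_neg_one_sub (hL1 : 1 ≤ L) (c : ZMod L) :
    ((-1 : ZMod L) - c).val = L - 1 - c.val := by
  have hc : c.val < L := ZMod.val_lt c
  have h1 : ((L - 1 - c.val : ℕ) : ZMod L) = -1 - c := by
    have h2 : (L - 1 - c.val) + c.val + 1 = L := by omega
    have h3 := congrArg (Nat.cast : ℕ → ZMod L) h2
    push_cast at h3
    rw [ZMod.natCast_self, ZMod.natCast_val, ZMod.cast_id] at h3
    linear_combination h3
  rw [← h1, ZMod.val_natCast, Nat.mod_eq_of_lt (by omega)]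

lemma mem_posHalf_iff (hL1 : 1 ≤ L) (i : Fin d) (x : Torus d L) :
    x ∈ posHalf d L i (2 * L - 1) ↔ (x i).val < L / 2 := by
  have ht : (2 * L - 1) % 2 = 1 := by omega
  have h2 : (2 * L - 1 + 1) / 2 = L := by omega
  simp [posHalf, ht, h2, ZMod.natCast_self]

lemma mem_reflect_iff (hLe : L % 2 = 0) (hL1 : 1 ≤ L) (i : Fin d) (x : Torus d L) :
    reflect i (2 * L - 1) x ∈ posHalf d L i (2 * L - 1) ↔ x ∉ posHalf d L i (2 * L - 1) := by
  rw [mem_posHalf_iff hL1, mem_posHalf_iff hL1, reflect_apply_self, cast_t hL1,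
    val_neg_one_sub hL1]
  have hv := ZMod.val_lt (x i)
  constructor
  · intro h h'; omega
  · intro h; omega

end Aux

section Aux2


variable {d L : ℕ} [NeZero L] {Sig : Type*}

/-- The insertion function `A_p = F²_p ∏_{y ∈ P ∖ {p}} F¹_y`. -/
noncomputable def insF (f1 f2 : Sig → ℝ) (P : Finset (Torus d L)) (p : Torus d L) :
    MState d L Sig → ℝ :=
  site f2 p * ∏ y ∈ P.erase p, site f1 y

lemma insF_mem {AL : Subalgebra ℝ (MState d L Sig → ℝ)} {f1 f2 : Sig → ℝ}
    (hF1 : ∀ x, site f1 x ∈ AL) (hF2 : ∀ x, site f2 x ∈ AL)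
    (P : Finset (Torus d L)) (p : Torus d L) : insF f1 f2 P p ∈ AL :=
  mul_mem (hF2 p) (prod_mem fun y _ => hF1 y)

lemma insF_domain {f1 f2 : Sig → ℝ} {P : Finset (Torus d L)} {p : Torus d L} (hp : p ∈ P) :
    HasDomain (insF f1 f2 P p) ↑P := by
  intro w₁ w₂ hw
  simp only [insF, Pi.mul_apply, site, Finset.prod_apply]
  rw [hw p hp]
  congr 1
  exact Finset.prod_congr rfl fun y hy => by rw [hw y (Finset.mem_of_mem_erase hy)]

lemma gram_eq (phi : (MState d L Sig → ℝ) →ₗ[ℝ] ℝ) (f1 f2 : Sig → ℝ) (i : Fin d)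
    (hLe : L % 2 = 0) (hL1 : 1 ≤ L)
    {p r : Torus d L} (hp : p ∈ posHalf d L i (2 * L - 1)) (hr : r ∈ posHalf d L i (2 * L - 1)) :
    phi (insF f1 f2 (posHalf d L i (2 * L - 1)) p *
      reflectFun i (2 * L - 1) (insF f1 f2 (posHalf d L i (2 * L - 1)) r)) =
    twoPoint phi f1 f2 p (reflect i (2 * L - 1) r) := by
  have hinv := reflect_involutive (L := L) i (2 * L - 1)
  have hinj : Function.Injective (reflect (L := L) i (2 * L - 1)) := hinv.injective
  have hrP : reflect i (2 * L - 1) r ∉ posHalf d L i (2 * L - 1) := by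
    intro h
    exact (mem_reflect_iff hLe hL1 i r).mp h hr
  congr 1
  funext w
  simp only [insF, reflectFun, Pi.mul_apply, site, Finset.prod_apply]
  have h1 : ∏ y ∈ (posHalf d L i (2 * L - 1)).erase r, f1 (w (reflect i (2 * L - 1) y))
      = ∏ y ∈ ((posHalf d L i (2 * L - 1)).erase r).image (reflect i (2 * L - 1)), f1 (w y) := by
    rw [Finset.prod_image (fun a _ b _ h => hinj h)]
  rw [h1]
  have hdisj : Disjoint ((posHalf d L i (2 * L - 1)).erase p)
      (((posHalf d L i (2 * L - 1)).erase r).image (reflect i (2 * L - 1))) := by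
    rw [Finset.disjoint_left]
    intro x hx hx'
    obtain ⟨y, hy, rfl⟩ := Finset.mem_image.mp hx'
    exact (mem_reflect_iff hLe hL1 i y).mp (Finset.mem_of_mem_erase hx)
      (Finset.mem_of_mem_erase hy)
  have hunion : ((posHalf d L i (2 * L - 1)).erase p) ∪
      (((posHalf d L i (2 * L - 1)).erase r).image (reflect i (2 * L - 1)))
      = (Finset.univ.erase p).erase (reflect i (2 * L - 1) r) := by
    ext x
    simp only [Finset.mem_union, Finset.mem_erase, Finset.mem_image, Finset.mem_univ, and_true]
    constructor
    · rintro (⟨hxp, hxP⟩ | ⟨y, ⟨hyr, hyP⟩, rfl⟩)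
      · refine ⟨fun h => hrP (h ▸ hxP), hxp⟩
      · refine ⟨fun h => hyr (hinj h), fun h => ?_⟩
        exact (mem_reflect_iff hLe hL1 i y).mp (h ▸ hp) hyP
    · rintro ⟨hxr, hxp⟩
      by_cases hxP : x ∈ posHalf d L i (2 * L - 1)
      · exact Or.inl ⟨hxp, hxP⟩
      · refine Or.inr ⟨reflect i (2 * L - 1) x, ⟨?_, ?_⟩, hinv x⟩
        · intro h; exact hxr (by rw [← hinv x, h])
        · exact (mem_reflect_iff hLe hL1 i x).mpr hxP
  rw [← hunion, Finset.prod_union hdisj]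
  ring

lemma twoPoint_translate {phi : (MState d L Sig → ℝ) →ₗ[ℝ] ℝ} {f1 f2 : Sig → ℝ}
    (hsym : TorusSymmetric phi f1 f2) {x y : Torus d L} (hxy : x ≠ y) (v : Torus d L) :
    twoPoint phi f1 f2 x y = twoPoint phi f1 f2 (x + v) (y + v) := by
  have h := hsym ((Finset.univ.erase x).erase y) {x, y} v
  have e1 : (fun w : MState d L Sig =>
        (∏ p ∈ (Finset.univ.erase x).erase y, f1 (w p)) * ∏ p ∈ ({x, y} : Finset _), f2 (w p))
      = (fun w => f2 (w x) * f2 (w y) * ∏ zz ∈ (Finset.univ.erase x).erase y, f1 (w zz)) := by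
    funext w
    rw [Finset.prod_pair hxy]
    ring
  have himg : ((Finset.univ.erase x).erase y).image (· + v)
      = (Finset.univ.erase (x + v)).erase (y + v) := by
    ext b
    simp only [Finset.mem_image, Finset.mem_erase, Finset.mem_univ, and_true]
    constructor
    · rintro ⟨a, ⟨hay, hax⟩, rfl⟩
      exact ⟨fun h => hay (by linear_combination (norm := module) h),
        fun h => hax (by linear_combination (norm := module) h)⟩
    · rintro ⟨hby, hbx⟩
      exact ⟨b - v, ⟨fun h => hby (by linear_combination (norm := module) h),
        fun h => hbx (by linear_combination (norm := module) h)⟩, by abel⟩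
  have e2 : (fun w : MState d L Sig =>
        (∏ p ∈ (Finset.univ.erase x).erase y, f1 (w (p + v))) *
          ∏ p ∈ ({x, y} : Finset _), f2 (w (p + v)))
      = (fun w => f2 (w (x + v)) * f2 (w (y + v)) *
          ∏ zz ∈ (Finset.univ.erase (x + v)).erase (y + v), f1 (w zz)) := by
    funext w
    rw [Finset.prod_pair hxy]
    have hre : ∏ p ∈ (Finset.univ.erase x).erase y, f1 (w (p + v))
        = ∏ p ∈ (Finset.univ.erase (x + v)).erase (y + v), f1 (w p) := by
      rw [← himg]
      rw [Finset.prod_image (fun a _ b _ h => by linear_combination (norm := module) h)]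
    rw [hre]
    ring
  rw [e1, e2] at h
  exact h

end Aux2

/-- If `⟨·⟩` is reflection positive for reflections through edges and the two-point function is
torus symmetric, then for `z·e i + q` odd with `z·e i ± q ∈ (0, L)`,
`G^{e i}_L(z + q e i) − G^{e i}_L(z) ≥ G^{e i}_L(z) − G^{e i}_L(z − q e i)`. -/
theorem statement9 {d L : ℕ} [NeZero L] (hd : 2 ≤ d) (hL : Even L) {Sig : Type*}
    (AL : Subalgebra ℝ (MState d L Sig → ℝ)) (hfin : FiniteDimensional ℝ AL)
    (phi : (MState d L Sig → ℝ) →ₗ[ℝ] ℝ) (hone : phi 1 = 1)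
    (f1 f2 : Sig → ℝ)
    (hF1 : ∀ x : Torus d L, site f1 x ∈ AL) (hF2 : ∀ x : Torus d L, site f2 x ∈ AL)
    (hRP : RPEdges AL phi) (hsym : TorusSymmetric phi f1 f2)
    (i : Fin d) (z : Torus d L) (q : ℕ) (hq : 1 ≤ q)
    (hodd : Odd ((z i).val + q)) (hlo : q < (z i).val) (hhi : (z i).val + q < L) :
    axisAvg phi f1 f2 i z - axisAvg phi f1 f2 i (z - axis i (q : ZMod L)) ≤
      axisAvg phi f1 f2 i (z + axis i (q : ZMod L)) - axisAvg phi f1 f2 i z := by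
  classical
  have hL1 : 1 ≤ L := Nat.one_le_iff_ne_zero.mpr (NeZero.ne L)
  have hLe : L % 2 = 0 := Nat.even_iff.mp hL
  set a' := (z i).val with ha'
  have hodd' : (a' + q) % 2 = 1 := Nat.odd_iff.mp hodd
  have haL : a' < L := ZMod.val_lt (z i)
  set h1n : ℕ := (L - 1 - a' - q) / 2 with hh1def
  set h2n : ℕ := (L + q - 1 - a') / 2 with hh2def
  have hh1 : 2 * h1n + 1 + a' + q = L := by omega
  have hh2 : 2 * h2n + 1 + a' = L + q := by omega
  have hh3 : h1n + h2n + 1 + a' = L := by omega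
  have h1lt : h1n < L / 2 := by omega
  have h2lt : h2n < L / 2 := by omega
  have hzi : ((a' : ℕ) : ZMod L) = z i := by rw [ha', ZMod.natCast_val, ZMod.cast_id]
  have c1 := congrArg (Nat.cast : ℕ → ZMod L) hh1
  have c2 := congrArg (Nat.cast : ℕ → ZMod L) hh2
  have c3 := congrArg (Nat.cast : ℕ → ZMod L) hh3
  push_cast at c1 c2 c3
  rw [ZMod.natCast_self] at c1 c2 c3
  have ar1 : (-1 : ZMod L) - (h1n : ZMod L) - (h1n : ZMod L) = z i + (q : ZMod L) := by
    rw [← hzi]; linear_combination -c1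
  have ar2 : (-1 : ZMod L) - (h2n : ZMod L) - (h2n : ZMod L) = z i - (q : ZMod L) := by
    rw [← hzi]; linear_combination -c2
  have ar3 : (-1 : ZMod L) - (h1n : ZMod L) - (h2n : ZMod L) = z i := by
    rw [← hzi]; linear_combination -c3
  have ar3' : (-1 : ZMod L) - (h2n : ZMod L) - (h1n : ZMod L) = z i := by
    linear_combination ar3
  set u : Torus d L := z - axis i (z i) with hud
  have hui : u i = 0 := by rw [hud]; simp [axis]
  have hsub : ∀ (c1 c2 : ZMod L) (v1 v2 : Torus d L), v1 i = 0 → v2 i = 0 →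
      reflect i (2 * L - 1) (axis i c2 + v2) - (axis i c1 + v1)
        = axis i ((-1 : ZMod L) - c2 - c1) + (v2 - v1) := by
    intro c1 c2 v1 v2 hv1 hv2
    funext k
    by_cases hk : k = i
    · subst hk
      simp only [Pi.sub_apply, Pi.add_apply, reflect_apply_self, cast_t hL1]
      simp [axis, hv1, hv2]
    · simp only [Pi.sub_apply, Pi.add_apply, reflect_apply_ne _ _ _ hk]
      simp [axis, hk]
  have haxadd : ∀ c : ZMod L, axis i (z i + c) = axis i (z i) + axis i c := by
    intro c; funext k; by_cases hk : k = i <;> simp [axis, hk]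
  have haxsub : ∀ c : ZMod L, axis i (z i - c) = axis i (z i) - axis i c := by
    intro c; funext k; by_cases hk : k = i <;> simp [axis, hk]
  set p1 : Torus d L := axis i (h1n : ZMod L) + 0 with hp1d
  set p2 : Torus d L := axis i (h1n : ZMod L) + u with hp2d
  set p3 : Torus d L := axis i (h2n : ZMod L) + 0 with hp3d
  set p4 : Torus d L := axis i (h2n : ZMod L) + u with hp4d
  have hmem : ∀ (c : ℕ) (v : Torus d L), v i = 0 → c < L / 2 →
      (axis i (c : ZMod L) + v) ∈ posHalf d L i (2 * L - 1) := by
    intro c v hv hc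
    rw [mem_posHalf_iff hL1]
    have hcoord : (axis i (c : ZMod L) + v) i = (c : ZMod L) := by simp [axis, hv]
    rw [hcoord, ZMod.val_natCast, Nat.mod_eq_of_lt (by omega)]
    exact hc
  have hp1 : p1 ∈ posHalf d L i (2 * L - 1) := by rw [hp1d]; exact hmem h1n 0 rfl h1lt
  have hp2 : p2 ∈ posHalf d L i (2 * L - 1) := by rw [hp2d]; exact hmem h1n u hui h1lt
  have hp3 : p3 ∈ posHalf d L i (2 * L - 1) := by rw [hp3d]; exact hmem h2n 0 rfl h2lt
  have hp4 : p4 ∈ posHalf d L i (2 * L - 1) := by rw [hp4d]; exact hmem h2n u hui h2lt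
  have hIs : IsRP AL phi i (2 * L - 1) := hRP i (2 * L - 1) (by omega) (by omega)
  have convE : ∀ pj pk : Torus d L, pj ∈ posHalf d L i (2 * L - 1) →
      pk ∈ posHalf d L i (2 * L - 1) → ∀ v : Torus d L, reflect i (2 * L - 1) pk - pj = v →
      phi (insF f1 f2 (posHalf d L i (2 * L - 1)) pj *
        reflectFun i (2 * L - 1) (insF f1 f2 (posHalf d L i (2 * L - 1)) pk))
        = twoPoint phi f1 f2 0 v := by
    intro pj pk hpj hpk v hv
    rw [gram_eq phi f1 f2 i hLe hL1 hpj hpk]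
    have hne : pj ≠ reflect i (2 * L - 1) pk := by
      intro h
      exact (mem_reflect_iff hLe hL1 i pk).mp (h ▸ hpj) hpk
    have ht := twoPoint_translate hsym hne (-pj)
    rw [add_neg_cancel] at ht
    rw [ht]
    congr 1
    rw [← hv]
    abel
  -- the ten vector identities
  have hv11 : reflect i (2 * L - 1) p1 - p1 = axis i (z i + (q : ZMod L)) := by
    rw [hp1d, hsub (h1n : ZMod L) (h1n : ZMod L) 0 0 rfl rfl, ar1, sub_self, add_zero]
  have hv22 : reflect i (2 * L - 1) p2 - p2 = axis i (z i + (q : ZMod L)) := by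
    rw [hp2d, hsub (h1n : ZMod L) (h1n : ZMod L) u u hui hui, ar1, sub_self, add_zero]
  have hv33 : reflect i (2 * L - 1) p3 - p3 = axis i (z i - (q : ZMod L)) := by
    rw [hp3d, hsub (h2n : ZMod L) (h2n : ZMod L) 0 0 rfl rfl, ar2, sub_self, add_zero]
  have hv44 : reflect i (2 * L - 1) p4 - p4 = axis i (z i - (q : ZMod L)) := by
    rw [hp4d, hsub (h2n : ZMod L) (h2n : ZMod L) u u hui hui, ar2, sub_self, add_zero]
  have hv12 : reflect i (2 * L - 1) p2 - p1 = z + axis i (q : ZMod L) := by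
    rw [hp2d, hp1d, hsub (h1n : ZMod L) (h1n : ZMod L) 0 u rfl hui, ar1, sub_zero,
      haxadd, hud]
    abel
  have hv34 : reflect i (2 * L - 1) p4 - p3 = z - axis i (q : ZMod L) := by
    rw [hp4d, hp3d, hsub (h2n : ZMod L) (h2n : ZMod L) 0 u rfl hui, ar2, sub_zero,
      haxsub, hud]
    abel
  have hv13 : reflect i (2 * L - 1) p3 - p1 = axis i (z i) := by
    rw [hp3d, hp1d, hsub (h1n : ZMod L) (h2n : ZMod L) 0 0 rfl rfl, ar3', sub_self, add_zero]
  have hv31 : reflect i (2 * L - 1) p1 - p3 = axis i (z i) := by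
    rw [hp1d, hp3d, hsub (h2n : ZMod L) (h1n : ZMod L) 0 0 rfl rfl, ar3, sub_self, add_zero]
  have hv24 : reflect i (2 * L - 1) p4 - p2 = axis i (z i) := by
    rw [hp4d, hp2d, hsub (h1n : ZMod L) (h2n : ZMod L) u u hui hui, ar3', sub_self, add_zero]
  have hv42 : reflect i (2 * L - 1) p2 - p4 = axis i (z i) := by
    rw [hp2d, hp4d, hsub (h2n : ZMod L) (h1n : ZMod L) u u hui hui, ar3, sub_self, add_zero]
  have hv14 : reflect i (2 * L - 1) p4 - p1 = z := by
    rw [hp4d, hp1d, hsub (h1n : ZMod L) (h2n : ZMod L) 0 u rfl hui, ar3', sub_zero, hud]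
    abel
  have hv32 : reflect i (2 * L - 1) p2 - p3 = z := by
    rw [hp2d, hp3d, hsub (h2n : ZMod L) (h1n : ZMod L) 0 u rfl hui, ar3, sub_zero, hud]
    abel
  have E11 := convE p1 p1 hp1 hp1 _ hv11
  have E22 := convE p2 p2 hp2 hp2 _ hv22
  have E33 := convE p3 p3 hp3 hp3 _ hv33
  have E44 := convE p4 p4 hp4 hp4 _ hv44
  have E12 := convE p1 p2 hp1 hp2 _ hv12
  have E34 := convE p3 p4 hp3 hp4 _ hv34
  have E13 := convE p1 p3 hp1 hp3 _ hv13
  have E31 := convE p3 p1 hp3 hp1 _ hv31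
  have E24 := convE p2 p4 hp2 hp4 _ hv24
  have E42 := convE p4 p2 hp4 hp2 _ hv42
  have E14 := convE p1 p4 hp1 hp4 _ hv14
  have E32 := convE p3 p2 hp3 hp2 _ hv32
  have hA1m : insF f1 f2 (posHalf d L i (2 * L - 1)) p1 ∈ AL := insF_mem hF1 hF2 _ _
  have hA1d : HasDomain (insF f1 f2 (posHalf d L i (2 * L - 1)) p1) ↑(posHalf d L i (2 * L - 1)) := insF_domain hp1
  have hA2m : insF f1 f2 (posHalf d L i (2 * L - 1)) p2 ∈ AL := insF_mem hF1 hF2 _ _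
  have hA2d : HasDomain (insF f1 f2 (posHalf d L i (2 * L - 1)) p2) ↑(posHalf d L i (2 * L - 1)) := insF_domain hp2
  have hA3m : insF f1 f2 (posHalf d L i (2 * L - 1)) p3 ∈ AL := insF_mem hF1 hF2 _ _
  have hA3d : HasDomain (insF f1 f2 (posHalf d L i (2 * L - 1)) p3) ↑(posHalf d L i (2 * L - 1)) := insF_domain hp3
  have hA4m : insF f1 f2 (posHalf d L i (2 * L - 1)) p4 ∈ AL := insF_mem hF1 hF2 _ _
  have hA4d : HasDomain (insF f1 f2 (posHalf d L i (2 * L - 1)) p4) ↑(posHalf d L i (2 * L - 1)) := insF_domain hp4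
  have heq21 := (hIs (insF f1 f2 (posHalf d L i (2 * L - 1)) p2) (insF f1 f2 (posHalf d L i (2 * L - 1)) p1) hA2m hA1m hA2d hA1d).1
  have heq43 := (hIs (insF f1 f2 (posHalf d L i (2 * L - 1)) p4) (insF f1 f2 (posHalf d L i (2 * L - 1)) p3) hA4m hA3m hA4d hA3d).1
  have heq41 := (hIs (insF f1 f2 (posHalf d L i (2 * L - 1)) p4) (insF f1 f2 (posHalf d L i (2 * L - 1)) p1) hA4m hA1m hA4d hA1d).1
  have heq23 := (hIs (insF f1 f2 (posHalf d L i (2 * L - 1)) p2) (insF f1 f2 (posHalf d L i (2 * L - 1)) p3) hA2m hA3m hA2d hA3d).1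
  set Bf : MState d L Sig → ℝ :=
    insF f1 f2 (posHalf d L i (2 * L - 1)) p1 + insF f1 f2 (posHalf d L i (2 * L - 1)) p2 - insF f1 f2 (posHalf d L i (2 * L - 1)) p3 - insF f1 f2 (posHalf d L i (2 * L - 1)) p4 with hBd
  have hBm : Bf ∈ AL := by
    rw [hBd]; exact sub_mem (sub_mem (add_mem hA1m hA2m) hA3m) hA4m
  have hBdom : HasDomain Bf ↑(posHalf d L i (2 * L - 1)) := by
    intro w1 w2 hw
    rw [hBd]
    simp only [Pi.add_apply, Pi.sub_apply]
    rw [hA1d w1 w2 hw, hA2d w1 w2 hw, hA3d w1 w2 hw, hA4d w1 w2 hw]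
  have hpos := (hIs Bf Bf hBm hBm hBdom hBdom).2
  have hreflB : reflectFun i (2 * L - 1) Bf
      = reflectFun i (2 * L - 1) (insF f1 f2 (posHalf d L i (2 * L - 1)) p1) + reflectFun i (2 * L - 1) (insF f1 f2 (posHalf d L i (2 * L - 1)) p2) - reflectFun i (2 * L - 1) (insF f1 f2 (posHalf d L i (2 * L - 1)) p3) - reflectFun i (2 * L - 1) (insF f1 f2 (posHalf d L i (2 * L - 1)) p4) := by
    rw [hBd]
    funext w
    simp only [reflectFun, Pi.add_apply, Pi.sub_apply]
  have hexpand : Bf * reflectFun i (2 * L - 1) Bf =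
      (insF f1 f2 (posHalf d L i (2 * L - 1)) p1 * reflectFun i (2 * L - 1) (insF f1 f2 (posHalf d L i (2 * L - 1)) p1) + insF f1 f2 (posHalf d L i (2 * L - 1)) p1 * reflectFun i (2 * L - 1) (insF f1 f2 (posHalf d L i (2 * L - 1)) p2) + insF f1 f2 (posHalf d L i (2 * L - 1)) p2 * reflectFun i (2 * L - 1) (insF f1 f2 (posHalf d L i (2 * L - 1)) p1) + insF f1 f2 (posHalf d L i (2 * L - 1)) p2 * reflectFun i (2 * L - 1) (insF f1 f2 (posHalf d L i (2 * L - 1)) p2)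
        + insF f1 f2 (posHalf d L i (2 * L - 1)) p3 * reflectFun i (2 * L - 1) (insF f1 f2 (posHalf d L i (2 * L - 1)) p3) + insF f1 f2 (posHalf d L i (2 * L - 1)) p3 * reflectFun i (2 * L - 1) (insF f1 f2 (posHalf d L i (2 * L - 1)) p4) + insF f1 f2 (posHalf d L i (2 * L - 1)) p4 * reflectFun i (2 * L - 1) (insF f1 f2 (posHalf d L i (2 * L - 1)) p3) + insF f1 f2 (posHalf d L i (2 * L - 1)) p4 * reflectFun i (2 * L - 1) (insF f1 f2 (posHalf d L i (2 * L - 1)) p4))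
      - (insF f1 f2 (posHalf d L i (2 * L - 1)) p1 * reflectFun i (2 * L - 1) (insF f1 f2 (posHalf d L i (2 * L - 1)) p3) + insF f1 f2 (posHalf d L i (2 * L - 1)) p1 * reflectFun i (2 * L - 1) (insF f1 f2 (posHalf d L i (2 * L - 1)) p4) + insF f1 f2 (posHalf d L i (2 * L - 1)) p2 * reflectFun i (2 * L - 1) (insF f1 f2 (posHalf d L i (2 * L - 1)) p3) + insF f1 f2 (posHalf d L i (2 * L - 1)) p2 * reflectFun i (2 * L - 1) (insF f1 f2 (posHalf d L i (2 * L - 1)) p4)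
        + insF f1 f2 (posHalf d L i (2 * L - 1)) p3 * reflectFun i (2 * L - 1) (insF f1 f2 (posHalf d L i (2 * L - 1)) p1) + insF f1 f2 (posHalf d L i (2 * L - 1)) p3 * reflectFun i (2 * L - 1) (insF f1 f2 (posHalf d L i (2 * L - 1)) p2) + insF f1 f2 (posHalf d L i (2 * L - 1)) p4 * reflectFun i (2 * L - 1) (insF f1 f2 (posHalf d L i (2 * L - 1)) p1) + insF f1 f2 (posHalf d L i (2 * L - 1)) p4 * reflectFun i (2 * L - 1) (insF f1 f2 (posHalf d L i (2 * L - 1)) p2)) := by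
    rw [hreflB, hBd]
    ring
  rw [hexpand] at hpos
  simp only [map_add, map_sub] at hpos
  rw [heq21, heq43, heq41, heq23] at hpos
  rw [E11, E22, E33, E44, E12, E34, E13, E31, E24, E42, E14, E32] at hpos
  have hc1 : (z + axis i (q : ZMod L)) i = z i + (q : ZMod L) := by simp [axis]
  have hc2 : (z - axis i (q : ZMod L)) i = z i - (q : ZMod L) := by simp [axis]
  simp only [axisAvg, hc1, hc2]
  linarith

end RPPaper
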